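/- Let n ≥ 2, d ≥ 2, j > 0, i ≥ 0, and A = ℂ⟨x_1,…,x_n⟩/⟨x^d+y^d⟩ where x=x_1, y=x_2. Then for any a ∈ A, the elements [x^{i+d} a, y^j] and [a y^j, x^{i+d}] are scalar multiples of [x^{i+d} y^j, a] in B_2(A). -/

import Mathlib

/-- `L₂(A)`: the span of commutators. -/
def L2 (K A : Type*) [Field K] [Ring A] [Algebra K A] : Submodule K A :=
  Submodule.span K {z | ∃ a b : A, z = a * b - b * a}

/-- `L₃(A) = [A, L₂(A)]`. -/
def L3 (K A : Type*) [Field K] [Ring A] [Algebra K A] : Submodule K A :=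
  Submodule.span K {z | ∃ a : A, ∃ x ∈ L2 K A, z = a * x - x * a}

set_option linter.unusedSectionVars false

namespace Stmt7Aux

variable {A : Type*} [Ring A] [Algebra ℂ A]

/-- commutator -/
def br (u v : A) : A := u * v - v * u

lemma br_mem_L2 (u v : A) : br u v ∈ L2 ℂ A := Submodule.subset_span ⟨u, v, rfl⟩

lemma br_mem_L3_right (u : A) {l : A} (hl : l ∈ L2 ℂ A) : br u l ∈ L3 ℂ A :=
  Submodule.subset_span ⟨u, l, hl, rfl⟩

lemma br_mem_L3_left {l : A} (hl : l ∈ L2 ℂ A) (u : A) : br l u ∈ L3 ℂ A := by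
  have h : br l u = -br u l := by simp only [br]; noncomm_ring
  rw [h]; exact neg_mem (br_mem_L3_right u hl)

lemma rot_left (u v w : A) : br (u*v) w - br (v*u) w ∈ L3 ℂ A := by
  have h : br (u*v) w - br (v*u) w = br (br u v) w := by simp only [br]; noncomm_ring
  rw [h]; exact br_mem_L3_left (br_mem_L2 u v) w

lemma rot_right (w u v : A) : br w (u*v) - br w (v*u) ∈ L3 ℂ A := by
  have h : br w (u*v) - br w (v*u) = br w (br u v) := by simp only [br]; noncomm_ring
  rw [h]; exact br_mem_L3_right w (br_mem_L2 u v)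

lemma tri (z w v : A) : br (z*w) v = br z (w*v) + br w (v*z) := by
  simp only [br]; noncomm_ring

lemma pow_br (z u : A) (k : ℕ) : ∀ v : A,
    br (z^(k+1) * u) v - (((k:ℂ)+1) • br z (z^k * (u*v)) + br u (v * z^(k+1))) ∈ L3 ℂ A := by
  induction k with
  | zero =>
    intro v
    have h : br (z^(0+1) * u) v - ((((0:ℕ):ℂ)+1) • br z (z^0 * (u*v)) + br u (v * z^(0+1))) = 0 := by
      simp only [br, pow_one, pow_zero, one_mul, Nat.cast_zero, zero_add, one_smul]
      noncomm_ring
    rw [h]; exact zero_mem _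
  | succ k ih =>
    intro v
    have e1 : z^(k+1+1) * u = z * (z^(k+1) * u) := by rw [pow_succ', mul_assoc]
    have e2 : (z^k * (u*v)) * z = z^k * (u * (v*z)) := by noncomm_ring
    have e3 : v * z^(k+1+1) = (v*z) * z^(k+1) := by rw [pow_succ']; noncomm_ring
    have e4 : z * (z^k * (u*v)) = z^(k+1) * (u*v) := by rw [pow_succ', mul_assoc]
    have e5 : (z^(k+1) * u) * v = z^(k+1) * (u*v) := mul_assoc _ _ _
    have hrot := rot_right z (z^k * (u*v)) z
    rw [e2, e4] at hrot
    have mem := Submodule.add_mem _ (ih (v*z)) (Submodule.smul_mem _ ((k:ℂ)+1) hrot)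
    convert mem using 1
    rw [e1, tri, e3, e5]
    push_cast
    module

lemma pow_br' (z u v : A) (k : ℕ) (hk : 1 ≤ k) :
    br (z^k * u) v - ((k:ℂ) • br z (z^(k-1) * (u*v)) + br u (v * z^k)) ∈ L3 ℂ A := by
  obtain ⟨k, rfl⟩ : ∃ k', k = k'+1 := ⟨k-1, by omega⟩
  simpa using pow_br z u k v

lemma pow_br1 (z v : A) (k : ℕ) (hk : 1 ≤ k) :
    br (z^k) v - (k:ℂ) • br z (z^(k-1) * v) ∈ L3 ℂ A := by
  have h := pow_br' z 1 v k hk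
  rw [mul_one, one_mul] at h
  have h0 : br (1:A) (v * z^k) = 0 := by simp [br]
  rw [h0, add_zero] at h
  exact h

lemma main {A : Type*} [Ring A] [Algebra ℂ A] (x y : A) (d : ℕ) (hd : 2 ≤ d)
    (hxy : x^d = -y^d) (i j : ℕ) (hj : 0 < j) (a : A) :
    (∃ c : ℂ,
      (x ^ (i + d) * a * y ^ j - y ^ j * (x ^ (i + d) * a)) -
        c • (x ^ (i + d) * y ^ j * a - a * (x ^ (i + d) * y ^ j)) ∈ L3 ℂ A) ∧
    (∃ c : ℂ,
      (a * y ^ j * x ^ (i + d) - x ^ (i + d) * (a * y ^ j)) -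
        c • (x ^ (i + d) * y ^ j * a - a * (x ^ (i + d) * y ^ j)) ∈ L3 ℂ A) := by
  have hdC : (d:ℂ) ≠ 0 := Nat.cast_ne_zero.mpr (by omega)
  -- F4
  have f4 : ∀ w : A, br x (x^(d-1) * w) + br y (y^(d-1) * w) ∈ L3 ℂ A := by
    intro w
    have hx := pow_br1 x w d (by omega)
    have hy := pow_br1 y w d (by omega)
    have hsum : br (x^d) w + br (y^d) w = 0 := by
      rw [hxy]; simp only [br]; noncomm_ring
    have mem : (d:ℂ) • (br x (x^(d-1) * w) + br y (y^(d-1) * w)) ∈ L3 ℂ A := by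
      have hmem := Submodule.add_mem _ hx hy
      have heq : (d:ℂ) • (br x (x^(d-1) * w) + br y (y^(d-1) * w)) =
          -((br (x^d) w - (d:ℂ) • br x (x^(d-1) * w)) +
            (br (y^d) w - (d:ℂ) • br y (y^(d-1) * w))) + (br (x^d) w + br (y^d) w) := by
        module
      rw [heq, hsum, add_zero]
      exact neg_mem hmem
    have hsm := Submodule.smul_mem _ ((d:ℂ)⁻¹) mem
    rwa [smul_smul, inv_mul_cancel₀ hdC, one_smul] at hsm
  set m := i + d with hm
  have hxm : x^m = -(y^d * x^i) := by
    rw [show m = d + i from by omega, pow_add, hxy, neg_mul]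
  have hsplit : x^(m-1) = x^(d-1) * x^i := by
    rw [← pow_add]; congr 1; omega
  have hysplit : y^j * y^(d-1) = y^(d+j-1) := by
    rw [← pow_add]; congr 1; omega
  have hyj : y^(j-1) * y^d = y^(d+j-1) := by
    rw [← pow_add]; congr 1; omega
  set S : A := br y (y^(d+j-1) * (x^i * a)) with hS
  -- hP
  have hP : br x (x^(m-1) * (a * y^j)) + S ∈ L3 ℂ A := by
    have h2 := f4 (x^i * (a * y^j))
    have h3 := rot_right y (y^(d-1) * (x^i * a)) (y^j)
    have e7 : (y^(d-1) * (x^i * a)) * y^j = y^(d-1) * (x^i * (a * y^j)) := by noncomm_ring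
    have e8 : y^j * (y^(d-1) * (x^i * a)) = y^(d+j-1) * (x^i * a) := by
      rw [← mul_assoc, hysplit]
    rw [e7, e8] at h3
    have e6 : x^(m-1) * (a * y^j) = x^(d-1) * (x^i * (a * y^j)) := by
      rw [hsplit]; noncomm_ring
    rw [e6]
    have mem := Submodule.sub_mem _ h2 h3
    convert mem using 1
    module
  -- hB
  have hB : br (x^m) (a * y^j) + (m:ℂ) • S ∈ L3 ℂ A := by
    have h1 := pow_br1 x (a * y^j) m (by omega)
    have mem := Submodule.add_mem _ h1 (Submodule.smul_mem _ (m:ℂ) hP)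
    convert mem using 1
    module
  -- hV
  have hV : br y (y^(j-1) * (x^m * a)) = -S := by
    have e : y^(j-1) * (x^m * a) = -(y^(d+j-1) * (x^i * a)) := by
      rw [hxm, ← hyj]; noncomm_ring
    rw [hS, e]; simp only [br]; noncomm_ring
  -- hU
  have hU : br (y^j * x^m) a + ((m:ℂ)+(j:ℂ)) • S ∈ L3 ℂ A := by
    have h1 := pow_br' y (x^m) a j hj
    rw [hV] at h1
    have mem := Submodule.add_mem _ h1 hB
    convert mem using 1
    module
  -- hT
  have hT : br (x^m * y^j) a + ((m:ℂ)+(j:ℂ)) • S ∈ L3 ℂ A := by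
    have h1 := rot_left (x^m) (y^j) a
    have mem := Submodule.add_mem _ h1 hU
    convert mem using 1
    module
  -- hE1
  have hE1 : br (x^m * a) (y^j) - (j:ℂ) • S ∈ L3 ℂ A := by
    have h1 := pow_br' x a (y^j) m (by omega)
    have hba : br a (y^j * x^m) = -br (y^j * x^m) a := by simp only [br]; noncomm_ring
    rw [hba] at h1
    have mem := Submodule.sub_mem _
      (Submodule.add_mem _ h1 (Submodule.smul_mem _ (m:ℂ) hP)) hU
    convert mem using 1
    module
  -- hE2
  have hE2 : br (a * y^j) (x^m) - (m:ℂ) • S ∈ L3 ℂ A := by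
    have hba : br (a * y^j) (x^m) = -br (x^m) (a * y^j) := by simp only [br]; noncomm_ring
    rw [hba]
    have mem := neg_mem hB
    convert mem using 1
    module
  have hmj : (m:ℂ) + (j:ℂ) ≠ 0 := by
    have : ((m+j:ℕ):ℂ) ≠ 0 := Nat.cast_ne_zero.mpr (by omega)
    push_cast at this; exact this
  constructor
  · refine ⟨-(j:ℂ)/((m:ℂ)+(j:ℂ)), ?_⟩
    have mem := Submodule.sub_mem _ hE1
      (Submodule.smul_mem _ (-(j:ℂ)/((m:ℂ)+(j:ℂ))) hT)
    convert mem using 1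
    show br (x^m * a) (y^j) - _ • br (x^m * y^j) a = _
    match_scalars <;> field_simp <;> ring
  · refine ⟨-(m:ℂ)/((m:ℂ)+(j:ℂ)), ?_⟩
    have mem := Submodule.sub_mem _ hE2
      (Submodule.smul_mem _ (-(m:ℂ)/((m:ℂ)+(j:ℂ))) hT)
    convert mem using 1
    show br (a * y^j) (x^m) - _ • br (x^m * y^j) a = _
    match_scalars <;> field_simp <;> ring

end Stmt7Aux

/-- The relation presenting `ℂ⟨x₁,…,xₙ⟩/⟨xᵈ+yᵈ⟩` where `x = x₁`, `y = x₂`. -/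
def reln (n d : ℕ) (hn : 2 ≤ n) :
    FreeAlgebra ℂ (Fin n) → FreeAlgebra ℂ (Fin n) → Prop :=
  fun a b =>
    a = FreeAlgebra.ι ℂ (⟨0, by omega⟩ : Fin n) ^ d +
        FreeAlgebra.ι ℂ (⟨1, by omega⟩ : Fin n) ^ d ∧ b = 0

/-- In `A = ℂ⟨x₁,…,xₙ⟩/⟨xᵈ+yᵈ⟩` (`n,d ≥ 2`, `x = x₁`, `y = x₂`), for `j > 0`, `i ≥ 0` and
any `a ∈ A`, the elements `[x^{i+d}a, yʲ]` and `[ayʲ, x^{i+d}]` are scalar multiples of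
`[x^{i+d}yʲ, a]` in `B₂(A)`. -/
theorem stmt7 (n d : ℕ) (hn : 2 ≤ n) (hd : 2 ≤ d) (i j : ℕ) (hj : 0 < j)
    (a : RingQuot (reln n d hn)) :
    letI x := RingQuot.mkAlgHom ℂ (reln n d hn) (FreeAlgebra.ι ℂ (⟨0, by omega⟩ : Fin n))
    letI y := RingQuot.mkAlgHom ℂ (reln n d hn) (FreeAlgebra.ι ℂ (⟨1, by omega⟩ : Fin n))
    (∃ c : ℂ,
      (x ^ (i + d) * a * y ^ j - y ^ j * (x ^ (i + d) * a)) -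
        c • (x ^ (i + d) * y ^ j * a - a * (x ^ (i + d) * y ^ j))
        ∈ L3 ℂ (RingQuot (reln n d hn))) ∧
    (∃ c : ℂ,
      (a * y ^ j * x ^ (i + d) - x ^ (i + d) * (a * y ^ j)) -
        c • (x ^ (i + d) * y ^ j * a - a * (x ^ (i + d) * y ^ j))
        ∈ L3 ℂ (RingQuot (reln n d hn))) := by
  have hrel : reln n d hn
      (FreeAlgebra.ι ℂ (⟨0, by omega⟩ : Fin n) ^ d +
        FreeAlgebra.ι ℂ (⟨1, by omega⟩ : Fin n) ^ d) 0 := ⟨rfl, rfl⟩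
  have h0 := RingQuot.mkAlgHom_rel ℂ hrel
  rw [map_add, map_pow, map_pow, map_zero] at h0
  exact Stmt7Aux.main _ _ d hd (eq_neg_of_add_eq_zero_left h0) i j hj a
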